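/- Let G ≤ Sym(n) be a transitive permutation group such that H = Der(G) ∪ {1} is a subgroup of G and such that Der(G) is not contained in the alternating group Alt(n). If D is a nonempty subset of Der(G) consisting entirely of odd permutations, then the independence number of Cay(G, Der(G) \ D) equals 2|G|/n. -/

import Mathlib

/-- The Cayley graph of a group `Γ` with (inverse-closed) connection set `C`:
`g` and `h` are adjacent iff they are distinct and `g⁻¹ * h ∈ C` (symmetrized). -/
def cayley (Γ : Type*) [Group Γ] (C : Set Γ) : SimpleGraph Γ where
  Adj g h := g ≠ h ∧ g⁻¹ * h ∈ C ∧ h⁻¹ * g ∈ C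
  symm := ⟨fun _ _ ⟨hne, h1, h2⟩ => ⟨hne.symm, h2, h1⟩⟩
  loopless := ⟨fun _ ⟨hne, _⟩ => hne rfl⟩

/-- A set of vertices of a graph is independent if its elements are pairwise non-adjacent. -/
def IsIndepSet {V : Type*} (X : SimpleGraph V) (s : Set V) : Prop :=
  s.Pairwise fun a b => ¬ X.Adj a b

/-- The independence number of a graph: the maximum size of an independent set. -/
noncomputable def indepNum {V : Type*} (X : SimpleGraph V) : ℕ :=
  sSup {k | ∃ s : Finset V, IsIndepSet X ↑s ∧ s.card = k}

/-- The set of derangements of a permutation group `G ≤ Sym(n)`: the elements of `G`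
fixing no point of `{1,…,n}`. -/
def der {n : ℕ} (G : Subgroup (Equiv.Perm (Fin n))) : Set G :=
  {σ : G | ∀ i : Fin n, (σ : Equiv.Perm (Fin n)) i ≠ i}

open MulAction

/-- If the derangements together with the identity form a subgroup `H` of a transitive
group `G ≤ Sym(n)`, then `|H| = n`. -/
lemma cardH_aux {n : ℕ} (G : Subgroup (Equiv.Perm (Fin n)))
    (hG : ∀ a b : Fin n, ∃ σ ∈ G, σ a = b)
    (H : Subgroup ↥G) (hH : (H : Set ↥G) = der G ∪ {1})
    (hn : 0 < n) : Nat.card H = n := by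
  classical
  haveI : Fintype ↥G := Fintype.ofFinite _
  haveI : IsPretransitive ↥G (Fin n) :=
    ⟨fun a b => by obtain ⟨σ, hσ, h⟩ := hG a b; exact ⟨⟨σ, hσ⟩, h⟩⟩
  have hderH : der G ⊆ (H : Set ↥G) := by rw [hH]; exact Set.subset_union_left
  have hmem : ∀ g : ↥G, g ∈ H ↔ g ∈ der G ∨ g = 1 := by
    intro g
    constructor
    · intro hg
      have : g ∈ (H : Set ↥G) := hg
      rw [hH] at this
      exact this
    · rintro (hg | rfl)
      · exact hderH hg
      · exact H.one_mem
  have a0 : Fin n := ⟨0, hn⟩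
  -- upper bound
  have hle : Nat.card H ≤ n := by
    have hinj : Function.Injective (fun h : ↥H => (h : ↥G) • a0) := by
      rintro h1 h2 he
      have hfix : ((h2 : ↥G)⁻¹ * h1) • a0 = a0 := by
        simp only at he
        rw [mul_smul, he, inv_smul_smul]
      have hmem' : ((h2 : ↥G)⁻¹ * h1) ∈ H := H.mul_mem (H.inv_mem h2.2) h1.2
      rcases (hmem _).1 hmem' with hd | h1'
      · exact absurd hfix (hd a0)
      · have : (h1 : ↥G) = h2 := by
          have := mul_eq_one_iff_inv_eq.mp h1'
          simpa [eq_comm] using this.symm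
        exact Subtype.ext this
    calc Nat.card H ≤ Nat.card (Fin n) := Nat.card_le_card_of_injective _ hinj
      _ = n := by simp
  -- lower bound via Burnside
  have hge : n ≤ Nat.card H := by
    haveI : Fintype (orbitRel.Quotient ↥G (Fin n)) := Quotient.fintype _
    have hΩ : Fintype.card (orbitRel.Quotient ↥G (Fin n)) = 1 := by
      haveI := (pretransitive_iff_subsingleton_quotient ↥G (Fin n)).mp inferInstance
      haveI : Nonempty (orbitRel.Quotient ↥G (Fin n)) := ⟨Quotient.mk'' a0⟩
      haveI : Inhabited (orbitRel.Quotient ↥G (Fin n)) := Classical.inhabited_of_nonempty ‹_›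
      exact Fintype.card_eq_one_iff_nonempty_unique.mpr ⟨Unique.mk' _⟩
    have hburn := sum_card_fixedBy_eq_card_orbits_mul_card_group ↥G (Fin n)
    rw [hΩ, one_mul] at hburn
    have hsplit : ∑ g : ↥G, Fintype.card (fixedBy (Fin n) g)
        = ∑ g ∈ Finset.univ.filter (· ∈ H), Fintype.card (fixedBy (Fin n) g)
          + ∑ g ∈ Finset.univ.filter (· ∉ H), Fintype.card (fixedBy (Fin n) g) :=
      (Finset.sum_filter_add_sum_filter_not _ _ _).symm
    have h1 : n ≤ ∑ g ∈ Finset.univ.filter (· ∈ H), Fintype.card (fixedBy (Fin n) g) := by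
      have hone : (1 : ↥G) ∈ Finset.univ.filter (· ∈ H) := by simp [H.one_mem]
      have hfix1 : Fintype.card (fixedBy (Fin n) (1 : ↥G)) = n := by
        have he : fixedBy (Fin n) (1 : ↥G) = Set.univ := by
          ext i; simp [MulAction.mem_fixedBy]
        rw [← Nat.card_eq_fintype_card, he, Nat.card_coe_set_eq, Set.ncard_univ,
          Nat.card_eq_fintype_card, Fintype.card_fin]
      calc n = Fintype.card (fixedBy (Fin n) (1 : ↥G)) := hfix1.symm
        _ ≤ _ := Finset.single_le_sum (f := fun g : ↥G => Fintype.card (fixedBy (Fin n) g))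
            (fun _ _ => Nat.zero_le _) hone
    have h2 : (Finset.univ.filter (· ∉ H)).card
        ≤ ∑ g ∈ Finset.univ.filter (· ∉ H), Fintype.card (fixedBy (Fin n) g) := by
      refine Finset.card_nsmul_le_sum _ _ 1 ?_ |>.trans_eq' (by simp)
      intro g hg
      simp only [Finset.mem_filter] at hg
      have hgd : g ∉ der G := fun hd => hg.2 (hderH hd)
      simp only [der, Set.mem_setOf_eq, not_forall, not_not] at hgd
      obtain ⟨i, hi⟩ := hgd
      have : i ∈ fixedBy (Fin n) g := hi
      exact Fintype.card_pos_iff.mpr ⟨⟨i, this⟩⟩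
    have hcards : (Finset.univ.filter (· ∈ H)).card + (Finset.univ.filter (· ∉ H)).card
        = Fintype.card ↥G := by
      rw [Finset.card_filter_add_card_filter_not]; rfl
    have hHcard : (Finset.univ.filter (· ∈ H)).card = Nat.card H := by
      rw [Nat.card_eq_fintype_card]
      simp [Fintype.card_subtype]
    have := hburn ▸ hsplit
    omega
  omega

/-- Let `G ≤ Sym(n)` be transitive with `H = Der(G) ∪ {1}` a subgroup and
with `Der(G) ⊄ Alt(n)`. If `D` is a nonempty inverse-closed set of odd derangements, then
the independence number of `Cay(G, Der(G) \ D)` equals `2|G|/n`. -/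
theorem stmt_7 {n : ℕ} (G : Subgroup (Equiv.Perm (Fin n)))
    (hG : ∀ a b : Fin n, ∃ σ ∈ G, σ a = b)
    (H : Subgroup ↥G) (hH : (H : Set G) = der G ∪ {1})
    (hodd : ∃ σ ∈ der G, Equiv.Perm.sign (σ : Equiv.Perm (Fin n)) = -1)
    (D : Set ↥G) (hD : D ⊆ der G) (hDne : D.Nonempty)
    (hDodd : ∀ d ∈ D, Equiv.Perm.sign (d : Equiv.Perm (Fin n)) = -1)
    (hDinv : ∀ d ∈ D, d⁻¹ ∈ D) :
    indepNum (cayley G (der G \ D)) = 2 * (Nat.card G / n) := by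
  classical
  -- the sign homomorphism on G
  set φ : ↥G →* ℤˣ := Equiv.Perm.sign.comp G.subtype with hφ
  have hφd : ∀ d ∈ D, φ d = -1 := fun d hd => hDodd d hd
  -- n is positive
  have hn : 0 < n := by
    by_contra hn0
    have hn0 : n = 0 := by omega
    obtain ⟨σ, _, hσs⟩ := hodd
    subst hn0
    have : (σ : Equiv.Perm (Fin 0)) = 1 := Equiv.ext fun i => i.elim0
    rw [this] at hσs
    simp at hσs
  -- basic membership facts
  have hderH : der G ⊆ (H : Set ↥G) := by rw [hH]; exact Set.subset_union_left
  have hmem : ∀ g : ↥G, g ∈ H ↔ g ∈ der G ∨ g = 1 := by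
    intro g
    constructor
    · intro hg
      have : g ∈ (H : Set ↥G) := hg
      rw [hH] at this
      exact this
    · rintro (hg | rfl)
      · exact hderH hg
      · exact H.one_mem
  have h1notder : (1 : ↥G) ∉ der G := by
    intro h
    exact h ⟨0, hn⟩ rfl
  have hHder : ∀ g : ↥G, g ∈ H → g ≠ 1 → g ∈ der G := by
    intro g hg hne
    rcases (hmem g).1 hg with h | h
    · exact h
    · exact absurd h hne
  obtain ⟨d, hdD⟩ := hDne
  have hdder : d ∈ der G := hD hdD
  have hdH : d ∈ H := hderH hdder
  have hdne1 : d ≠ 1 := by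
    intro h
    have := hφd d hdD
    rw [h] at this
    simp [hφ] at this
  have hcardH : Nat.card H = n := cardH_aux G hG H hH hn
  haveI : Fintype ↥G := Fintype.ofFinite _
  haveI : Fintype (↥G ⧸ H) := Fintype.ofFinite _
  set m := Nat.card (↥G ⧸ H) with hm
  have hdiv : Nat.card G / n = m := by
    have := Subgroup.card_eq_card_quotient_mul_card_subgroup H
    rw [hcardH] at this
    rw [this, Nat.mul_div_cancel _ hn]
  rw [hdiv]
  -- key: non-adjacent elements in the same coset differ by an element of D
  have hkey : ∀ x y : ↥G, x ≠ y → x⁻¹ * y ∈ H →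
      ¬ (cayley ↥G (der G \ D)).Adj x y → x⁻¹ * y ∈ D := by
    intro x y hne hxyH hnadj
    have hxyder : x⁻¹ * y ∈ der G := hHder _ hxyH (by
      intro h
      exact hne (by rw [← mul_one x, ← h, mul_inv_cancel_left]))
    have hyxder : y⁻¹ * x ∈ der G := hHder _ (by
        have : y⁻¹ * x = (x⁻¹ * y)⁻¹ := by group
        rw [this]; exact H.inv_mem hxyH) (by
      intro h
      exact hne.symm (by rw [← mul_one y, ← h, mul_inv_cancel_left]))
    have hnadj' : ¬(x ≠ y ∧ (x⁻¹ * y ∈ der G \ D) ∧ (y⁻¹ * x ∈ der G \ D)) := hnadj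
    by_cases h1 : x⁻¹ * y ∈ D
    · exact h1
    · by_cases h2 : y⁻¹ * x ∈ D
      · have : (y⁻¹ * x)⁻¹ ∈ D := hDinv _ h2
        rw [show (y⁻¹ * x)⁻¹ = x⁻¹ * y by group] at this
        exact this
      · exact absurd ⟨hne, ⟨hxyder, h1⟩, ⟨hyxder, h2⟩⟩ hnadj'
  -- upper bound: every independent set has size at most 2 * m
  have hub : ∀ k ∈ {k | ∃ s : Finset ↥G, IsIndepSet (cayley ↥G (der G \ D)) ↑s ∧ s.card = k},
      k ≤ 2 * m := by
    rintro k ⟨s, hs, rfl⟩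
    have hfib : ∀ q : ↥G ⧸ H, (s.filter (fun g => QuotientGroup.mk g = q)).card ≤ 2 := by
      intro q
      by_contra hc
      push_neg at hc
      rw [show 2 < (s.filter (fun g => QuotientGroup.mk g = q)).card ↔ _ from Finset.two_lt_card]
        at hc
      obtain ⟨a, ha, b, hb, c, hcm, hab, hac, hbc⟩ := hc
      simp only [Finset.mem_filter] at ha hb hcm
      have hco : ∀ x y : ↥G, x ∈ s.filter (fun g => QuotientGroup.mk g = q) →
          y ∈ s.filter (fun g => QuotientGroup.mk g = q) → x ≠ y → x⁻¹ * y ∈ D := by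
        intro x y hx hy hxy
        simp only [Finset.mem_filter] at hx hy
        have hcoset : x⁻¹ * y ∈ H := by
          have : (QuotientGroup.mk x : ↥G ⧸ H) = QuotientGroup.mk y := by rw [hx.2, hy.2]
          exact QuotientGroup.eq.mp this
        exact hkey x y hxy hcoset (hs hx.1 hy.1 hxy)
      have h1 : a⁻¹ * b ∈ D := hco a b (by simp [ha]) (by simp [hb]) hab
      have h2 : a⁻¹ * c ∈ D := hco a c (by simp [ha]) (by simp [hcm]) hac
      have h3 : b⁻¹ * c ∈ D := hco b c (by simp [hb]) (by simp [hcm]) hbc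
      have heq : (a⁻¹ * b)⁻¹ * (a⁻¹ * c) = b⁻¹ * c := by group
      have := hφd _ h3
      rw [← heq, map_mul, map_inv, hφd _ h1, hφd _ h2] at this
      simp at this
    calc s.card = ∑ q : ↥G ⧸ H, (s.filter (fun g => QuotientGroup.mk g = q)).card :=
          Finset.card_eq_sum_card_fiberwise (fun g _ => Finset.mem_univ _)
      _ ≤ ∑ _q : ↥G ⧸ H, 2 := Finset.sum_le_sum (fun q _ => hfib q)
      _ = 2 * m := by
          rw [Finset.sum_const, Finset.card_univ, smul_eq_mul, mul_comm,
            ← Nat.card_eq_fintype_card]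
  -- lower bound: an explicit independent set of size 2 * m
  have hlb : ∃ s : Finset ↥G, IsIndepSet (cayley ↥G (der G \ D)) ↑s ∧ s.card = 2 * m := by
    set rep : ↥G ⧸ H → ↥G := Quotient.out with hrep
    have hrepmk : ∀ q : ↥G ⧸ H, (QuotientGroup.mk (rep q) : ↥G ⧸ H) = q := fun q =>
      QuotientGroup.out_eq' q
    set t1 : Finset ↥G := Finset.univ.image rep with ht1
    set t2 : Finset ↥G := Finset.univ.image (fun q => rep q * d) with ht2
    have hinj1 : Function.Injective rep := fun q q' h => by
      rw [← hrepmk q, ← hrepmk q', h]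
    have hinj2 : Function.Injective (fun q => rep q * d) := fun q q' h => by
      have : rep q = rep q' := by
        have := mul_right_cancel (h : rep q * d = rep q' * d)
        exact this
      exact hinj1 this
    have hmkt1 : ∀ x ∈ t1, ∃ q, x = rep q ∧ (QuotientGroup.mk x : ↥G ⧸ H) = q := by
      intro x hx
      simp only [ht1, Finset.mem_image, Finset.mem_univ, true_and] at hx
      obtain ⟨q, rfl⟩ := hx
      exact ⟨q, rfl, hrepmk q⟩
    have hmkt2 : ∀ x ∈ t2, ∃ q, x = rep q * d ∧ (QuotientGroup.mk x : ↥G ⧸ H) = q := by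
      intro x hx
      simp only [ht2, Finset.mem_image, Finset.mem_univ, true_and] at hx
      obtain ⟨q, rfl⟩ := hx
      exact ⟨q, rfl, by rw [QuotientGroup.mk_mul_of_mem _ hdH, hrepmk q]⟩
    have hdisj : Disjoint t1 t2 := by
      rw [Finset.disjoint_left]
      intro x hx1 hx2
      obtain ⟨q, rfl, _⟩ := hmkt1 x hx1
      obtain ⟨q', he, _⟩ := hmkt2 _ hx2
      have hq : q = q' := by
        rw [← hrepmk q, ← hrepmk q', he, QuotientGroup.mk_mul_of_mem _ hdH]
      rw [hq] at he
      exact hdne1 (left_eq_mul.mp he)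
    refine ⟨t1 ∪ t2, ?_, ?_⟩
    · -- independence
      intro x hx y hy hne
      simp only [Finset.coe_union, Set.mem_union, Finset.mem_coe] at hx hy
      intro hadj
      obtain ⟨hne', hxy, hyx⟩ := hadj
      -- both "differences" lie in der G ⊆ H, so x and y are in the same coset
      have hxyH : x⁻¹ * y ∈ H := hderH hxy.1
      have hsame : (QuotientGroup.mk x : ↥G ⧸ H) = QuotientGroup.mk y :=
        QuotientGroup.eq.mpr hxyH
      -- analyze the four cases
      have hxd : x⁻¹ * y ∈ D := by
        rcases hx with hx | hx <;> rcases hy with hy | hy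
        · obtain ⟨q, rfl, hq⟩ := hmkt1 x hx
          obtain ⟨q', rfl, hq'⟩ := hmkt1 y hy
          have : q = q' := by rw [← hq, ← hq', hsame]
          subst this
          exact absurd rfl hne
        · obtain ⟨q, rfl, hq⟩ := hmkt1 x hx
          obtain ⟨q', rfl, hq'⟩ := hmkt2 y hy
          have : q = q' := by rw [← hq, ← hq', hsame]
          subst this
          rw [inv_mul_cancel_left]
          exact hdD
        · obtain ⟨q, rfl, hq⟩ := hmkt2 x hx
          obtain ⟨q', rfl, hq'⟩ := hmkt1 y hy
          have : q = q' := by rw [← hq, ← hq', hsame]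
          subst this
          rw [show (rep q * d)⁻¹ * rep q = d⁻¹ * ((rep q)⁻¹ * rep q) by group,
            inv_mul_cancel, mul_one]
          exact hDinv _ hdD
        · obtain ⟨q, rfl, hq⟩ := hmkt2 x hx
          obtain ⟨q', rfl, hq'⟩ := hmkt2 y hy
          have : q = q' := by rw [← hq, ← hq', hsame]
          subst this
          exact absurd rfl hne
      exact hxy.2 hxd
    · -- cardinality
      rw [Finset.card_union_of_disjoint hdisj, ht1, ht2,
        Finset.card_image_of_injective _ hinj1, Finset.card_image_of_injective _ hinj2,
        Finset.card_univ, ← Nat.card_eq_fintype_card, ← hm]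
      ring
  -- conclude
  apply le_antisymm
  · exact csSup_le ⟨0, ⟨∅, by simp [IsIndepSet], by simp⟩⟩ hub
  · exact le_csSup ⟨2 * m, hub⟩ hlb
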